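/- Let R_s ∈ ℂ^{r×r} be Hermitian positive semidefinite and R̃ as above with Schur complement R̃_{1.2} and B = [I_r, −β^†]. With E = [I_r, 0_{r×(N−r)}]^T, it holds that (R̃ + E R_s E^†)^{−1} = B^† (R_s + R̃_{1.2})^{−1} B + block-diag(0_{r×r}, R̃_22^{−1}), and det(R̃ + E R_s E^†) = det R̃_22 · det(R_s + R̃_{1.2}). -/

import Mathlib

open Matrix ComplexOrder

/-- Variant of the block inversion identities with the top-left block perturbed by a PSD
matrix: for `R̃` Hermitian positive definite with blocks `R̃_11, R̃_12, R̃_21, R̃_22`,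
`R_s` Hermitian PSD, `E = [I_r, 0]ᵀ`, `R̃_{1.2} = R̃_11 − R̃_12 R̃_22⁻¹ R̃_21`,
`β = R̃_22⁻¹ R̃_21` and `B = [I_r, −β†]`, one has
`(R̃ + E R_s E†)⁻¹ = B† (R_s + R̃_{1.2})⁻¹ B + blockdiag(0, R̃_22⁻¹)` and
`det(R̃ + E R_s E†) = det R̃_22 · det(R_s + R̃_{1.2})`. -/
theorem stmt14 (N r : ℕ) (hr : r ≤ N)
    (R11 : Matrix (Fin r) (Fin r) ℂ) (R12 : Matrix (Fin r) (Fin (N - r)) ℂ)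
    (R21 : Matrix (Fin (N - r)) (Fin r) ℂ) (R22 : Matrix (Fin (N - r)) (Fin (N - r)) ℂ)
    (hPD : (Matrix.fromBlocks R11 R12 R21 R22).PosDef)
    (Rs : Matrix (Fin r) (Fin r) ℂ) (hRs : Rs.PosSemidef)
    (E : Matrix (Fin r ⊕ Fin (N - r)) (Fin r) ℂ)
    (hE : E = Matrix.fromRows (1 : Matrix (Fin r) (Fin r) ℂ) (0 : Matrix (Fin (N - r)) (Fin r) ℂ)) :
    (Matrix.fromBlocks R11 R12 R21 R22 + E * Rs * Eᴴ)⁻¹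
        = (Matrix.fromCols (1 : Matrix (Fin r) (Fin r) ℂ) (-(R22⁻¹ * R21)ᴴ))ᴴ *
            (Rs + (R11 - R12 * R22⁻¹ * R21))⁻¹ *
            Matrix.fromCols (1 : Matrix (Fin r) (Fin r) ℂ) (-(R22⁻¹ * R21)ᴴ) +
          Matrix.fromBlocks 0 0 0 R22⁻¹ ∧
    (Matrix.fromBlocks R11 R12 R21 R22 + E * Rs * Eᴴ).det
        = R22.det * (Rs + (R11 - R12 * R22⁻¹ * R21)).det := by
  -- the perturbation is a block matrix
  have hERs : E * Rs * Eᴴ = Matrix.fromBlocks Rs 0 0 0 := by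
    subst hE
    ext (i | i) (j | j) <;>
      simp [Matrix.mul_apply, Matrix.fromRows_apply_inl, Matrix.fromRows_apply_inr, Matrix.one_apply,
        Fintype.sum_sum_type, Finset.sum_ite_eq]
  have hMPD : (Matrix.fromBlocks R11 R12 R21 R22 + E * Rs * Eᴴ).PosDef :=
    hPD.add_posSemidef (hRs.mul_mul_conjTranspose_same E)
  have hM' : Matrix.fromBlocks R11 R12 R21 R22 + E * Rs * Eᴴ
      = Matrix.fromBlocks (R11 + Rs) R12 R21 R22 := by
    rw [hERs, Matrix.fromBlocks_add]
    congr 1 <;> simp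
  rw [hM'] at hMPD
  -- hermitian components
  have hH := hPD.1
  rw [Matrix.IsHermitian, Matrix.fromBlocks_conjTranspose] at hH
  have h12 : R21ᴴ = R12 := congrArg Matrix.toBlocks₁₂ hH
  have h22 : R22ᴴ = R22 := congrArg Matrix.toBlocks₂₂ hH
  -- R22 is positive definite
  have hR22PD : R22.PosDef := by
    refine Matrix.PosDef.of_dotProduct_mulVec_pos h22 (fun x hx => ?_)
    have hx' : Sum.elim (0 : Fin r → ℂ) x ≠ 0 := by
      intro h0
      exact hx (funext fun i => congrFun h0 (Sum.inr i))
    have := hPD.dotProduct_mulVec_pos hx'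
    simpa [Matrix.fromBlocks_mulVec, dotProduct, Fintype.sum_sum_type,
      Matrix.mulVec, dotProduct] using this
  haveI : Invertible R22 := R22.invertibleOfIsUnitDet (isUnit_iff_ne_zero.mpr hR22PD.det_pos.ne')
  haveI : Invertible (Matrix.fromBlocks (R11 + Rs) R12 R21 R22) :=
    (Matrix.fromBlocks (R11 + Rs) R12 R21 R22).invertibleOfIsUnitDet (isUnit_iff_ne_zero.mpr hMPD.det_pos.ne')
  haveI : Invertible ((R11 + Rs) - R12 * ⅟R22 * R21) :=
    Matrix.invertibleOfFromBlocks₂₂Invertible (R11 + Rs) R12 R21 R22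
  have hinv22 : ⅟R22 = R22⁻¹ := Matrix.invOf_eq_nonsing_inv R22
  have hS : (R11 + Rs) - R12 * ⅟R22 * R21 = Rs + (R11 - R12 * R22⁻¹ * R21) := by
    rw [hinv22]; abel
  haveI hSinv : Invertible (Rs + (R11 - R12 * R22⁻¹ * R21)) := by
    rw [← hS]; infer_instance
  have hinvS : ⅟(Rs + (R11 - R12 * R22⁻¹ * R21)) = (Rs + (R11 - R12 * R22⁻¹ * R21))⁻¹ :=
    Matrix.invOf_eq_nonsing_inv _
  have hβH : (R22⁻¹ * R21)ᴴ = R12 * R22⁻¹ := by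
    rw [Matrix.conjTranspose_mul, Matrix.conjTranspose_nonsing_inv, h22, h12]
  constructor
  · rw [hM', ← Matrix.invOf_eq_nonsing_inv,
      Matrix.invOf_fromBlocks₂₂_eq (R11 + Rs) R12 R21 R22]
    rw [Matrix.conjTranspose_fromCols_eq_fromRows_conjTranspose,
      Matrix.conjTranspose_neg, Matrix.conjTranspose_conjTranspose,
      Matrix.conjTranspose_one, Matrix.fromRows_mul, Matrix.fromRows_mul_fromCols,
      Matrix.fromBlocks_add]
    simp only [Matrix.invOf_eq_nonsing_inv]
    have hS' : R11 + Rs - R12 * R22⁻¹ * R21 = Rs + (R11 - R12 * R22⁻¹ * R21) := by abel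
    rw [hS', hβH]
    simp only [Matrix.mul_one, Matrix.one_mul, add_zero, Matrix.mul_neg, Matrix.neg_mul,
      neg_neg, Matrix.mul_assoc]
    rw [add_comm R22⁻¹]
  · rw [hM', Matrix.det_fromBlocks₂₂, hS]
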